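/- Let A = ℂ[ℤ₂] be the group algebra of ℤ₂ over ℂ. Then the Hopf-algebraic plaquette operator B on A⊗A⊗A⊗A satisfies B(φ_{g₁} ⊗ φ_{g₂} ⊗ φ_{g₃} ⊗ φ_{g₄}) = (1 + (−1)^{g₁+g₂+g₃+g₄}) · (φ_{g₁} ⊗ φ_{g₂} ⊗ φ_{g₃} ⊗ φ_{g₄}), i.e., B = id^{⊗4} + σ_z ⊗ σ_z ⊗ σ_z ⊗ σ_z where σ_z φ_g = (−1)^g φ_g; and the star operator A_op satisfies A_op = id^{⊗4} + σ_x ⊗ σ_x ⊗ σ_x ⊗ σ_x where σ_x φ_g = φ_{g+1}. Thus the construction recovers the toric code plaquette and vertex operators. -/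

import Mathlib

/-!
STATEMENT 19: For A = ℂ[ℤ₂], the Hopf-algebraic plaquette operator B on A⊗A⊗A⊗A satisfies
B(φ_{g₁} ⊗ φ_{g₂} ⊗ φ_{g₃} ⊗ φ_{g₄}) = (1 + (−1)^{g₁+g₂+g₃+g₄})·(φ_{g₁} ⊗ φ_{g₂} ⊗ φ_{g₃} ⊗ φ_{g₄}),
i.e. B = id^{⊗4} + σ_z⊗σ_z⊗σ_z⊗σ_z, and the star operator satisfies
A_op = id^{⊗4} + σ_x⊗σ_x⊗σ_x⊗σ_x: the construction recovers the toric code operators.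
-/

open TensorProduct

set_option synthInstance.maxHeartbeats 1000000
set_option maxSynthPendingDepth 5
set_option maxHeartbeats 1000000

noncomputable section

/-- The group algebra ℂ[ℤ₂]. -/
abbrev GA : Type := AddMonoidAlgebra ℂ (ZMod 2)

/-- The basis element φ_g of ℂ[ℤ₂]. -/
def phi (g : ZMod 2) : GA := AddMonoidAlgebra.single g 1

/-- The trace character χ(a) = trace of left multiplication by a. -/
def chiGA : GA →ₗ[ℂ] ℂ := (LinearMap.trace ℂ GA) ∘ₗ (LinearMap.mul ℂ GA)

/-- Comultiplication on ℂ[ℤ₂]: Δφ_g = φ_g ⊗ φ_g. -/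
def comulGA : GA →ₗ[ℂ] GA ⊗[ℂ] GA :=
  (Finsupp.lsum ℂ fun g => LinearMap.toSpanSingleton ℂ (GA ⊗[ℂ] GA) (phi g ⊗ₜ[ℂ] phi g)) ∘ₗ
    (AddMonoidAlgebra.coeffLinearEquiv ℂ).toLinearMap

/-- The fourfold tensor product. -/
abbrev T4GA : Type := GA ⊗[ℂ] (GA ⊗[ℂ] (GA ⊗[ℂ] GA))

/-- `(a ⊗ b) ⊗ (c ⊗ t) ↦ (a*c) ⊗ (b ⊗ t)`. -/
def mulStep (N : Type*) [AddCommGroup N] [Module ℂ N] :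
    ((GA ⊗[ℂ] GA) ⊗[ℂ] (GA ⊗[ℂ] N)) →ₗ[ℂ] (GA ⊗[ℂ] (GA ⊗[ℂ] N)) :=
  (TensorProduct.map (LinearMap.mul' ℂ GA) LinearMap.id) ∘ₗ
    (TensorProduct.tensorTensorTensorComm ℂ GA GA GA N).toLinearMap

/-- Comultiplication of each of the four tensor factors. -/
def comul4GA : T4GA →ₗ[ℂ]
    ((GA ⊗[ℂ] GA) ⊗[ℂ] ((GA ⊗[ℂ] GA) ⊗[ℂ] ((GA ⊗[ℂ] GA) ⊗[ℂ] (GA ⊗[ℂ] GA)))) :=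
  TensorProduct.map comulGA (TensorProduct.map comulGA (TensorProduct.map comulGA comulGA))

/-- The plaquette operator
`B(x₁ ⊗ x₂ ⊗ x₃ ⊗ x₄) = ∑ χ(x₁₍₁₎x₂₍₁₎x₃₍₁₎x₄₍₁₎) x₁₍₂₎ ⊗ x₂₍₂₎ ⊗ x₃₍₂₎ ⊗ x₄₍₂₎`. -/
def plaquetteGA : T4GA →ₗ[ℂ] T4GA :=
  (TensorProduct.lid ℂ T4GA).toLinearMap
    ∘ₗ (LinearMap.rTensor T4GA chiGA)
    ∘ₗ (mulStep (GA ⊗[ℂ] (GA ⊗[ℂ] GA)))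
    ∘ₗ (LinearMap.lTensor (GA ⊗[ℂ] GA) (mulStep (GA ⊗[ℂ] GA)))
    ∘ₗ (LinearMap.lTensor (GA ⊗[ℂ] GA) (LinearMap.lTensor (GA ⊗[ℂ] GA) (mulStep GA)))
    ∘ₗ comul4GA

/-- The cotrace element Λ = φ₀ + φ₁. -/
def LambdaGA : GA := phi 0 + phi 1

/-- ∑ Λ₍₁₎ ⊗ Λ₍₂₎ ⊗ Λ₍₃₎ ⊗ Λ₍₄₎, the threefold comultiplication of Λ. -/
def LambdaLegs : T4GA :=
  (LinearMap.lTensor GA (LinearMap.lTensor GA comulGA))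
    ((LinearMap.lTensor GA comulGA) (comulGA LambdaGA))

/-- The star operator: componentwise left multiplication by Λ₍₁₎ ⊗ Λ₍₂₎ ⊗ Λ₍₃₎ ⊗ Λ₍₄₎. -/
def starOpGA : T4GA →ₗ[ℂ] T4GA := LinearMap.mulLeft ℂ LambdaLegs

/-- σ_z : φ_g ↦ (−1)^g φ_g. -/
def sigmaZ : GA →ₗ[ℂ] GA :=
  (AddMonoidAlgebra.coeffLinearEquiv ℂ).symm.toLinearMap ∘ₗ
    (Finsupp.lsum ℂ fun (g : ZMod 2) => ((-1 : ℂ) ^ g.val) • Finsupp.lsingle g) ∘ₗ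
    (AddMonoidAlgebra.coeffLinearEquiv ℂ).toLinearMap

/-- σ_x : φ_g ↦ φ_{g+1}. -/
def sigmaX : GA →ₗ[ℂ] GA :=
  (AddMonoidAlgebra.coeffLinearEquiv ℂ).symm.toLinearMap ∘ₗ
    (Finsupp.lsum ℂ fun (g : ZMod 2) => Finsupp.lsingle (g + 1)) ∘ₗ
    (AddMonoidAlgebra.coeffLinearEquiv ℂ).toLinearMap

lemma phi_mul (g h : ZMod 2) : phi g * phi h = phi (g + h) := by
  simp [phi, AddMonoidAlgebra.single_mul_single]

lemma comul_phi (g : ZMod 2) : comulGA (phi g) = phi g ⊗ₜ[ℂ] phi g := by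
  simp only [comulGA, phi, LinearMap.coe_comp, Function.comp_apply, LinearEquiv.coe_coe, AddMonoidAlgebra.coeffLinearEquiv_apply, AddMonoidAlgebra.coeff_single]; erw [Finsupp.lsum_single]; simp [phi]

lemma chi_phi (g : ZMod 2) : chiGA (phi g) = 1 + (-1 : ℂ) ^ g.val := by
  have h : chiGA (phi g) = LinearMap.trace ℂ GA (LinearMap.mulLeft ℂ (phi g)) := rfl
  rw [h]
  rw [LinearMap.trace_eq_matrix_trace ℂ (AddMonoidAlgebra.basis (ZMod 2) ℂ)]
  have hc : ∀ x y : ZMod 2, (phi x).coeff y = if x = y then 1 else 0 := fun x y => by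
    simp [phi, Finsupp.single_apply]
  simp only [Matrix.trace, LinearMap.toMatrix_apply, LinearMap.mulLeft_apply,
    AddMonoidAlgebra.basis_apply, Matrix.diag]
  rw [show (Finset.univ : Finset (ZMod 2)) = {0, 1} by decide]
  rw [Finset.sum_insert (by decide), Finset.sum_singleton]
  simp only [AddMonoidAlgebra.basis, show ∀ x : ZMod 2, AddMonoidAlgebra.single x (1:ℂ) = phi x from fun _ => rfl, phi_mul, AddMonoidAlgebra.coeffLinearEquiv_apply, hc]
  obtain rfl | rfl : g = 0 ∨ g = 1 := by fin_cases g; exacts [Or.inl rfl, Or.inr rfl]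
  · simp
  · simp [show ((1:ZMod 2)+1) = 0 from by decide, show ZMod.val (1:ZMod 2) = 1 from rfl]

lemma mulStep_tmul (N : Type*) [AddCommGroup N] [Module ℂ N] (a b c : GA) (n : N) :
    mulStep N ((a ⊗ₜ[ℂ] b) ⊗ₜ[ℂ] (c ⊗ₜ[ℂ] n)) = (a * c) ⊗ₜ[ℂ] (b ⊗ₜ[ℂ] n) := by
  simp [mulStep, TensorProduct.tensorTensorTensorComm_tmul, LinearMap.mul'_apply]

lemma plaquette_phi (g₁ g₂ g₃ g₄ : ZMod 2) :
    plaquetteGA (phi g₁ ⊗ₜ[ℂ] (phi g₂ ⊗ₜ[ℂ] (phi g₃ ⊗ₜ[ℂ] phi g₄))) =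
      (1 + (-1 : ℂ) ^ (g₁ + g₂ + g₃ + g₄).val) •
        (phi g₁ ⊗ₜ[ℂ] (phi g₂ ⊗ₜ[ℂ] (phi g₃ ⊗ₜ[ℂ] phi g₄))) := by
  simp only [plaquetteGA, LinearMap.comp_apply, comul4GA, TensorProduct.map_tmul, comul_phi,
    LinearMap.lTensor_tmul, mulStep_tmul, phi_mul, LinearMap.rTensor_tmul,
    LinearEquiv.coe_coe, TensorProduct.lid_tmul]
  rw [chi_phi, show g₁ + (g₂ + (g₃ + g₄)) = g₁ + g₂ + g₃ + g₄ by ring]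

def bGA : Module.Basis (ZMod 2) ℂ GA := AddMonoidAlgebra.basis (ZMod 2) ℂ

lemma bGA_eq (g : ZMod 2) : bGA g = phi g := rfl

def b4 : Module.Basis (ZMod 2 × (ZMod 2 × (ZMod 2 × ZMod 2))) ℂ T4GA :=
  Module.Basis.tensorProduct bGA (Module.Basis.tensorProduct bGA (Module.Basis.tensorProduct bGA bGA))

lemma sigmaZ_phi (g : ZMod 2) : sigmaZ (phi g) = ((-1 : ℂ) ^ g.val) • phi g := by
  simp only [sigmaZ, phi, LinearMap.coe_comp, Function.comp_apply, LinearEquiv.coe_coe, AddMonoidAlgebra.coeffLinearEquiv_apply, AddMonoidAlgebra.coeff_single]; erw [Finsupp.lsum_single]; rfl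

lemma sigmaX_phi (g : ZMod 2) : sigmaX (phi g) = phi (g + 1) := by
  simp only [sigmaX, phi, LinearMap.coe_comp, Function.comp_apply, LinearEquiv.coe_coe, AddMonoidAlgebra.coeffLinearEquiv_apply, AddMonoidAlgebra.coeff_single]; erw [Finsupp.lsum_single]; rfl

lemma sign_add (a b : ZMod 2) :
    (-1 : ℂ) ^ a.val * (-1 : ℂ) ^ b.val = (-1 : ℂ) ^ (a + b).val := by
  rw [← pow_add, ZMod.val_add, ← neg_one_pow_eq_pow_mod_two]

lemma b4_apply (g₁ g₂ g₃ g₄ : ZMod 2) :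
    b4 (g₁, g₂, g₃, g₄) = phi g₁ ⊗ₜ[ℂ] (phi g₂ ⊗ₜ[ℂ] (phi g₃ ⊗ₜ[ℂ] phi g₄)) := by
  simp [b4, Module.Basis.tensorProduct_apply', bGA_eq]

lemma LambdaLegs_eq : LambdaLegs =
    phi 0 ⊗ₜ[ℂ] (phi 0 ⊗ₜ[ℂ] (phi 0 ⊗ₜ[ℂ] phi 0)) +
    phi 1 ⊗ₜ[ℂ] (phi 1 ⊗ₜ[ℂ] (phi 1 ⊗ₜ[ℂ] phi 1)) := by
  simp [LambdaLegs, LambdaGA, map_add, comul_phi, LinearMap.lTensor_tmul]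
theorem toric_code_from_hopf :
    (∀ g₁ g₂ g₃ g₄ : ZMod 2,
      plaquetteGA (phi g₁ ⊗ₜ[ℂ] (phi g₂ ⊗ₜ[ℂ] (phi g₃ ⊗ₜ[ℂ] phi g₄))) =
        (1 + (-1 : ℂ) ^ (g₁ + g₂ + g₃ + g₄).val) •
          (phi g₁ ⊗ₜ[ℂ] (phi g₂ ⊗ₜ[ℂ] (phi g₃ ⊗ₜ[ℂ] phi g₄)))) ∧
    plaquetteGA = LinearMap.id +
      TensorProduct.map sigmaZ (TensorProduct.map sigmaZ (TensorProduct.map sigmaZ sigmaZ)) ∧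
    starOpGA = LinearMap.id +
      TensorProduct.map sigmaX (TensorProduct.map sigmaX (TensorProduct.map sigmaX sigmaX)) := by
  refine ⟨plaquette_phi, ?_, ?_⟩
  · apply b4.ext
    rintro ⟨g₁, g₂, g₃, g₄⟩
    rw [b4_apply, plaquette_phi]
    simp only [LinearMap.add_apply, LinearMap.id_apply, TensorProduct.map_tmul, sigmaZ_phi,
      TensorProduct.smul_tmul, TensorProduct.tmul_smul, smul_smul]
    rw [add_smul, one_smul]
    congr 1
    rw [← sign_add, ← sign_add, ← sign_add]
    ring
  · apply b4.ext
    rintro ⟨g₁, g₂, g₃, g₄⟩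
    rw [b4_apply]
    simp only [starOpGA, LinearMap.mulLeft_apply, LambdaLegs_eq, add_mul,
      Algebra.TensorProduct.tmul_mul_tmul, phi_mul, zero_add,
      LinearMap.add_apply, LinearMap.id_apply, TensorProduct.map_tmul, sigmaX_phi]
    simp only [show ∀ g : ZMod 2, 1 + g = g + 1 from fun g => add_comm 1 g]

end
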